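/- arXiv:2410.06849 — 2 statements merged into one kernel-verified Lean document; each statement's English description precedes it below -/
import Mathlib

section
/- Let B be a partial-circulant-block matrix (each block B_{ij} a k₂-partial circulant matrix of size k₂×n₂) and A a circulant-block matrix (each block A_{ij} an n₂×n₂ circulant matrix). Then Q = BA is a partial-circulant-block matrix, i.e., each block Q_{ij} = Σ_{l} B_{il} A_{lj} is a k₂-partial circulant matrix. -/
/-- A `k₂ × n₂` matrix is `k₂`-partial circulant if it consists of the first `k₂` rows
of a circulant matrix. -/
def IsPartialCirculant {F : Type*} {k₂ n₂ : ℕ} (M : Matrix (Fin k₂) (ZMod n₂) F) : Prop :=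
  ∃ a : ZMod n₂ → F, ∀ i t, M i t = a (t - ((i : ℕ) : ZMod n₂))

/-- An `n₂ × n₂` matrix is circulant if `A s t = a (t - s)` for some vector `a`. -/
def IsCirculant {F : Type*} {n₂ : ℕ} (A : Matrix (ZMod n₂) (ZMod n₂) F) : Prop :=
  ∃ a : ZMod n₂ → F, ∀ s t, A s t = a (t - s)

/-- if `B` is partial-circulant-block and `A` is circulant-block, then
every block of `Q = BA` is a `k₂`-partial circulant matrix. -/
theorem partialCirculantBlock_mul_circulantBlock {F : Type*} [Field F]
    {k₁ n₁ k₂ n₂ : ℕ} [NeZero n₂]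
    (B : Matrix (Fin k₁ × Fin k₂) (Fin n₁ × ZMod n₂) F)
    (A : Matrix (Fin n₁ × ZMod n₂) (Fin n₁ × ZMod n₂) F)
    (hB : ∀ (i : Fin k₁) (j : Fin n₁),
      IsPartialCirculant (Matrix.of fun s t => B (i, s) (j, t)))
    (hA : ∀ (i : Fin n₁) (j : Fin n₁),
      IsCirculant (Matrix.of fun s t => A (i, s) (j, t))) :
    ∀ (i : Fin k₁) (j : Fin n₁),
      IsPartialCirculant (Matrix.of fun s t => (B * A) (i, s) (j, t)) := by
  intro i j
  choose b hb using hB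
  choose a ha using hA
  refine ⟨fun x => ∑ l, ∑ u, b i l u * a l j (x - u), fun s t => ?_⟩
  simp only [Matrix.of_apply, Matrix.mul_apply, Fintype.sum_prod_type]
  refine Finset.sum_congr rfl fun l _ => ?_
  refine (Fintype.sum_equiv (Equiv.addRight ((s : ℕ) : ZMod n₂))
    (fun u => b i l u * a l j (t - ((s : ℕ) : ZMod n₂) - u)) _ fun u => ?_).symm
  have h1 := hb i l s (u + ((s : ℕ) : ZMod n₂))
  have h2 := ha l j (u + ((s : ℕ) : ZMod n₂)) t
  simp only [Matrix.of_apply] at h1 h2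
  simp only [Equiv.coe_addRight]
  rw [h1, h2]
  congr 1
  · congr 1; ring
  · congr 1; ring
end

section
/- Let e ∈ (F_{q^m})^n with rank weight rk_q(e) = t, and let P ∈ (F_{q^m})^{n×n'} be a matrix all of whose entries lie in an F_q-subspace U ⊆ F_{q^m} of dimension λ'. Then rk_q(eP) ≤ λ'·t, where rk_q of a vector over F_{q^m} is the dimension of the F_q-span of its coordinates. -/
/-- Auxiliary: any element of a submodule is an `Fq`-linear combination of a basis,
viewed in the ambient module. -/
lemma mem_span_of_basis_aux {Fq K : Type*} [Field Fq] [AddCommGroup K] [Module Fq K]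
    {ι : Type*} [Fintype ι] (V : Submodule Fq K) (b : Module.Basis ι Fq V)
    {y : K} (hy : y ∈ V) : y = ∑ i, b.repr ⟨y, hy⟩ i • (b i : K) := by
  have h := b.sum_repr ⟨y, hy⟩
  have := congrArg (V.subtype) h
  simpa [-Module.Basis.sum_repr] using this.symm

/-- if `e` has rank weight `t` and all entries of `P` lie in an
`F_q`-subspace `U` of dimension `λ'`, then `rk_q(eP) ≤ λ'·t`. -/
theorem rank_weight_mul_subspace_matrix {Fq K : Type*} [Field Fq] [Field K]
    [Algebra Fq K] [FiniteDimensional Fq K] {n n' lam t : ℕ}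
    (e : Fin n → K) (P : Matrix (Fin n) (Fin n') K)
    (U : Submodule Fq K) (hU : Module.finrank Fq U = lam)
    (hP : ∀ i j, P i j ∈ U)
    (ht : Module.finrank Fq (Submodule.span Fq (Set.range e)) = t) :
    Module.finrank Fq (Submodule.span Fq (Set.range (Matrix.vecMul e P))) ≤ lam * t := by
  set V : Submodule Fq K := Submodule.span Fq (Set.range e) with hV
  have bU : Module.Basis (Fin lam) Fq U := by
    haveI : FiniteDimensional Fq U := inferInstance
    exact (Module.finBasis Fq U).reindex (finCongr (by rw [hU]))
  have bV : Module.Basis (Fin t) Fq V := by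
    haveI : FiniteDimensional Fq V := inferInstance
    exact (Module.finBasis Fq V).reindex (finCongr (by rw [ht]))
  set g : Fin lam × Fin t → K := fun p => (bU p.1 : K) * (bV p.2 : K) with hg
  set W : Submodule Fq K := Submodule.span Fq (Set.range g) with hW
  have hmul : ∀ x ∈ U, ∀ y ∈ V, x * y ∈ W := by
    intro x hx y hy
    rw [mem_span_of_basis_aux U bU hx, mem_span_of_basis_aux V bV hy,
      Finset.sum_mul_sum]
    apply Submodule.sum_mem
    intro a _
    apply Submodule.sum_mem
    intro b _
    have : (bU.repr ⟨x, hx⟩ a • (bU a : K)) * (bV.repr ⟨y, hy⟩ b • (bV b : K))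
        = (bU.repr ⟨x, hx⟩ a * bV.repr ⟨y, hy⟩ b) • g (a, b) := by
      rw [hg, smul_mul_assoc, mul_smul_comm, mul_smul]
    rw [this]
    exact Submodule.smul_mem _ _ (Submodule.subset_span ⟨(a, b), rfl⟩)
  have hle : Submodule.span Fq (Set.range (Matrix.vecMul e P)) ≤ W := by
    rw [Submodule.span_le]
    rintro _ ⟨j, rfl⟩
    show (Matrix.vecMul e P) j ∈ W
    rw [Matrix.vecMul, dotProduct]
    refine Submodule.sum_mem _ fun i _ => ?_
    rw [mul_comm]
    exact hmul _ (hP i j) _ (Submodule.subset_span ⟨i, rfl⟩)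
  calc Module.finrank Fq (Submodule.span Fq (Set.range (Matrix.vecMul e P)))
      ≤ Module.finrank Fq W := Submodule.finrank_mono hle
    _ ≤ Fintype.card (Fin lam × Fin t) := finrank_range_le_card g
    _ = lam * t := by simp
end
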